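/- Let D be an integral domain of characteristic zero and let A, B, w ∈ D[x,y]. Suppose Jac(A,B) is a unit of D[x,y], Jac(A,w) = 0, and additionally the D-algebra endomorphism of D[x,y] sending x ↦ A and y ↦ B is an automorphism of D[x,y]. Then w lies in D[A], the D-subalgebra of D[x,y] generated by A. -/

import Mathlib

open MvPolynomial

/-- The Jacobian of two polynomials `p, q ∈ R[x,y]`:
`Jac(p,q) = (∂p/∂x)(∂q/∂y) − (∂p/∂y)(∂q/∂x)`. -/
noncomputable def Jac {R : Type*} [CommRing R]
    (p q : MvPolynomial (Fin 2) R) : MvPolynomial (Fin 2) R :=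
  pderiv 0 p * pderiv 1 q - pderiv 1 p * pderiv 0 q

private lemma coeff_pderiv_aux {D : Type*} [CommRing D] (i : Fin 2) (m : Fin 2 →₀ ℕ)
    (f : MvPolynomial (Fin 2) D) :
    coeff m (pderiv i f) = (m i + 1 : ℕ) * coeff (m + Finsupp.single i 1) f := by
  induction f using MvPolynomial.induction_on' with
  | add p q hp hq => simp [hp, hq, mul_add]
  | monomial s a =>
    rw [pderiv_monomial, coeff_monomial, coeff_monomial]
    by_cases hs : s i = 0
    · have h1 : ¬ (s = m + Finsupp.single i 1) := by
        intro h
        have := DFunLike.congr_fun h i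
        simp [hs] at this
      rw [if_neg h1, mul_zero]
      split <;> simp [hs]
    · have hle : Finsupp.single i 1 ≤ s := by
        rw [Finsupp.single_le_iff]; omega
      have hiff : (s - Finsupp.single i 1 = m) ↔ (s = m + Finsupp.single i 1) := by
        constructor
        · rintro rfl
          exact (tsub_add_cancel_of_le hle).symm
        · rintro rfl
          exact add_tsub_cancel_right m (Finsupp.single i 1)
      by_cases hm : s = m + Finsupp.single i 1
      · have h1 : s - Finsupp.single i 1 = m := hiff.mpr hm
        have h2 : m i + 1 = s i := by
          have := DFunLike.congr_fun hm i
          simpa using this.symm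
        simp only [if_pos h1, if_pos hm, ← h2]
        push_cast
        ring
      · rw [if_neg hm, if_neg (fun h => hm (hiff.mp h)), mul_zero]

private lemma pderiv_aeval_pair {D : Type*} [CommRing D] (A B : MvPolynomial (Fin 2) D)
    (i : Fin 2) (g : MvPolynomial (Fin 2) D) :
    pderiv i (aeval ![A, B] g) =
      aeval ![A, B] (pderiv 0 g) * pderiv i A + aeval ![A, B] (pderiv 1 g) * pderiv i B := by
  induction g using MvPolynomial.induction_on with
  | C a => simp
  | add p q hp hq => simp only [map_add, hp, hq]; ring
  | mul_X p j hp =>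
    have hj : j = 0 ∨ j = 1 := by omega
    rcases hj with rfl | rfl <;>
      simp only [map_mul, aeval_X, Matrix.cons_val_zero, Matrix.cons_val_one, Matrix.head_cons,
        pderiv_mul, pderiv_X, Pi.single_apply, hp, map_add, map_mul, if_pos rfl, map_one,
        mul_one, mul_zero, add_zero, zero_add] <;>
      · norm_num
        ring

/-- **Special case: automorphism pair.** Over an integral domain `D` of characteristic
zero: if `Jac(A,B)` is a unit of `D[x,y]`, `Jac(A,w) = 0`, and the `D`-algebra
endomorphism `x ↦ A, y ↦ B` of `D[x,y]` is an automorphism, then `w ∈ D[A]`. -/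
theorem cmw_automorphism_pair {D : Type*} [CommRing D] [IsDomain D] [CharZero D]
    (A B w : MvPolynomial (Fin 2) D)
    (hAB : IsUnit (Jac A B)) (hAw : Jac A w = 0)
    (hauto : Function.Bijective
      ⇑(MvPolynomial.aeval (R := D) ![A, B] :
        MvPolynomial (Fin 2) D →ₐ[D] MvPolynomial (Fin 2) D)) :
    w ∈ Algebra.adjoin D {A} := by
  obtain ⟨g, hg⟩ := hauto.surjective w
  have hchain : Jac A w = aeval ![A, B] (pderiv 1 g) * Jac A B := by
    rw [← hg]
    unfold Jac
    rw [pderiv_aeval_pair, pderiv_aeval_pair]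
    ring
  have h1 : aeval ![A, B] (pderiv 1 g) = 0 := by
    rw [hchain] at hAw
    rcases mul_eq_zero.mp hAw with h | h
    · exact h
    · exact absurd h hAB.ne_zero
  have h2 : pderiv (1 : Fin 2) g = 0 := hauto.injective (by rw [h1, map_zero])
  have h3 : g ∈ supported D ({0} : Set (Fin 2)) := by
    rw [mem_supported]
    intro j hj
    rw [Finset.mem_coe, mem_vars] at hj
    obtain ⟨m, hm, hjm⟩ := hj
    rw [Finsupp.mem_support_iff] at hjm
    rcases (by omega : j = 0 ∨ j = 1) with rfl | rfl
    · exact Set.mem_singleton _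
    · exfalso
      have hm1 : (1 : Fin 2) ∈ m.support := Finsupp.mem_support_iff.mpr hjm
      have key := coeff_pderiv_aux (1 : Fin 2) (m - Finsupp.single 1 1) g
      rw [h2] at key
      have hle : Finsupp.single (1 : Fin 2) 1 ≤ m := by
        rw [Finsupp.single_le_iff]
        omega
      have hadd : (m - Finsupp.single 1 1) + Finsupp.single (1 : Fin 2) 1 = m :=
        tsub_add_cancel_of_le hle
      rw [hadd] at key
      have : coeff m g = 0 := by
        rcases mul_eq_zero.mp key.symm with h | h
        · exact absurd h (Nat.cast_ne_zero.mpr (Nat.succ_ne_zero _))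
        · exact h
      exact (mem_support_iff.mp hm) this
  have h4 : g ∈ Algebra.adjoin D ({X 0} : Set (MvPolynomial (Fin 2) D)) := by
    rw [supported_eq_adjoin_X, Set.image_singleton] at h3
    exact h3
  have h5 : w ∈ (Algebra.adjoin D ({X 0} : Set (MvPolynomial (Fin 2) D))).map
      (aeval (R := D) ![A, B]) := ⟨g, h4, hg⟩
  rw [AlgHom.map_adjoin, Set.image_singleton, aeval_X, Matrix.cons_val_zero] at h5
  exact h5
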